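/- Under the binary homogeneous Dawid–Skene model with full assignment: if w̄ ≥ 1/2 + 1/M, then for every worker i and every item j, w_i − ξ₁ ≤ P(Z_ij = ŷ_j^mv | y_j) ≤ w_i + ξ₂, where ξ₁ = w_i·exp(−2M²·(w̄ − 1/2 + (1−w_i)/M)²/(M−1)) and ξ₂ = (1−w_i)·exp(−2M²·(w̄ − 1/2 − w_i/M)²/(M−1)); moreover the same bounds hold unconditionally: w_i − ξ₁ ≤ P(Z_ij = ŷ_j^mv) ≤ w_i + ξ₂. -/

import Mathlib

open MeasureTheory ProbabilityTheory Real

noncomputable section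

namespace OneStepWMV

/-- Majority vote for item `j` of a `{−1,+1}`-valued label matrix `Z` (with `sign 0 = +1`). -/
def mvSign {M N : ℕ} (Z : Fin M → Fin N → ℤ) (j : Fin N) : ℤ :=
  if 0 ≤ ∑ i, Z i j then 1 else -1

/-- Estimated accuracy of worker `i`: its agreement rate with the majority vote. -/
def what {M N : ℕ} (Z : Fin M → Fin N → ℤ) (i : Fin M) : ℝ :=
  (N : ℝ)⁻¹ * ∑ j, if Z i j = mvSign Z j then (1 : ℝ) else 0

/-- One-step weighted majority voting score `f_j(Z) = Σ_i (2ŵ_i − 1) Z_ij` of item `j`. -/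
def wmvScore {M N : ℕ} (Z : Fin M → Fin N → ℤ) (j : Fin N) : ℝ :=
  ∑ i, (2 * what Z i - 1) * (Z i j : ℝ)

/-- One-step weighted majority vote for item `j` (with `sign 0 = +1`). -/
def wmvSign {M N : ℕ} (Z : Fin M → Fin N → ℤ) (j : Fin N) : ℤ :=
  if 0 ≤ wmvScore Z j then 1 else -1

end OneStepWMV

section Aux
open Finset

private lemma Dpos (p : ℝ) (hp0 : 0 ≤ p) (hp1 : p ≤ 1) (x : ℝ) :
    0 < 1 - p + p * Real.exp x := by
  rcases lt_or_ge p 1 with h | h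
  · nlinarith [mul_nonneg hp0 (Real.exp_pos x).le]
  · have : p = 1 := le_antisymm hp1 h
    subst this; simpa using Real.exp_pos x

private lemma q_le (p : ℝ) (hp0 : 0 ≤ p) (hp1 : p ≤ 1) (x : ℝ) (hx : 0 ≤ x) :
    p * Real.exp x ≤ (p + x / 4) * (1 - p + p * Real.exp x) := by
  set F : ℝ → ℝ := fun t => p + t / 4 - p * Real.exp t / (1 - p + p * Real.exp t) with hF
  have hD : ∀ t : ℝ, 0 < 1 - p + p * Real.exp t := Dpos p hp0 hp1
  have hder : ∀ t : ℝ, HasDerivAt F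
      (1 / 4 - (p * Real.exp t * (1 - p + p * Real.exp t) - p * Real.exp t * (p * Real.exp t)) /
        (1 - p + p * Real.exp t) ^ 2) t := by
    intro t
    have h1 : HasDerivAt (fun t : ℝ => p * Real.exp t) (p * Real.exp t) t :=
      (Real.hasDerivAt_exp t).const_mul p
    have h2 : HasDerivAt (fun t : ℝ => 1 - p + p * Real.exp t) (p * Real.exp t) t :=
      h1.const_add (1 - p)
    have h3 := h1.div h2 (hD t).ne'
    have h4 : HasDerivAt (fun t : ℝ => p + t / 4) (1 / 4) t := by
      simpa using ((hasDerivAt_id t).div_const 4).const_add p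
    exact h4.sub h3
  have hmono : Monotone F := by
    apply monotone_of_deriv_nonneg
    · exact fun t => (hder t).differentiableAt
    · intro t
      rw [(hder t).deriv]
      have h := hD t
      rw [sub_nonneg, div_le_iff₀ (by positivity)]
      nlinarith [sq_nonneg ((1 - p) - p * Real.exp t), mul_nonneg hp0 (Real.exp_pos t).le]
  have h0 : F 0 = 0 := by simp [hF]
  have := hmono hx
  rw [h0] at this
  have h2 : p * Real.exp x / (1 - p + p * Real.exp x) ≤ p + x / 4 := by
    simp only [hF] at this; linarith
  calc p * Real.exp x = p * Real.exp x / (1 - p + p * Real.exp x) * (1 - p + p * Real.exp x) := by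
        rw [div_mul_cancel₀ _ (hD x).ne']
    _ ≤ (p + x / 4) * (1 - p + p * Real.exp x) :=
        mul_le_mul_of_nonneg_right h2 (hD x).le

private lemma bern_mgf (p : ℝ) (hp0 : 0 ≤ p) (hp1 : p ≤ 1) (x : ℝ) (hx : 0 ≤ x) :
    1 - p + p * Real.exp x ≤ Real.exp (p * x + x ^ 2 / 8) := by
  set G : ℝ → ℝ := fun t => (1 - p + p * Real.exp t) * Real.exp (-(p * t + t ^ 2 / 8)) with hG
  have hder : ∀ t : ℝ, HasDerivAt G
      (p * Real.exp t * Real.exp (-(p * t + t ^ 2 / 8)) +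
        (1 - p + p * Real.exp t) * (Real.exp (-(p * t + t ^ 2 / 8)) * -(p + t / 4))) t := by
    intro t
    have h1 : HasDerivAt (fun t : ℝ => 1 - p + p * Real.exp t) (p * Real.exp t) t :=
      ((Real.hasDerivAt_exp t).const_mul p).const_add (1 - p)
    have h2 : HasDerivAt (fun t : ℝ => -(p * t + t ^ 2 / 8)) (-(p + t / 4)) t := by
      have ha : HasDerivAt (fun t : ℝ => p * t + t ^ 2 / 8) (p + t / 4) t := by
        have hb : HasDerivAt (fun t : ℝ => p * t) p t := by
          simpa using (hasDerivAt_id t).const_mul p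
        have hc : HasDerivAt (fun t : ℝ => t ^ 2 / 8) (t / 4) t := by
          have := ((hasDerivAt_pow 2 t).div_const 8)
          simpa [mul_comm] using this.congr_deriv (by ring)
        exact hb.add hc
      exact ha.neg
    exact h1.mul (h2.exp)
  have hanti : AntitoneOn G (Set.Ici (0 : ℝ)) := by
    apply antitoneOn_of_deriv_nonpos (convex_Ici 0)
    · exact fun t _ => (hder t).differentiableAt.continuousAt.continuousWithinAt
    · exact fun t _ => ((hder t).differentiableAt).differentiableWithinAt
    · intro t ht
      rw [interior_Ici] at ht
      rw [(hder t).deriv]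
      have hq := q_le p hp0 hp1 t (le_of_lt ht)
      have he : (0:ℝ) < Real.exp (-(p * t + t ^ 2 / 8)) := Real.exp_pos _
      nlinarith
  have hGx : G x ≤ G 0 := hanti (Set.self_mem_Ici) hx hx
  have hG0 : G 0 = 1 := by simp [hG]
  rw [hG0] at hGx
  have he : (0:ℝ) < Real.exp (p * x + x ^ 2 / 8) := Real.exp_pos _
  have : G x * Real.exp (p * x + x ^ 2 / 8) = 1 - p + p * Real.exp x := by
    simp only [hG]
    rw [mul_assoc, ← Real.exp_add]
    rw [show -(p * x + x ^ 2 / 8) + (p * x + x ^ 2 / 8) = 0 by ring, Real.exp_zero, mul_one]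
  nlinarith

private lemma bern_mgf_neg (p : ℝ) (hp0 : 0 ≤ p) (hp1 : p ≤ 1) (x : ℝ) (hx : 0 ≤ x) :
    p * Real.exp (-x) + (1 - p) ≤ Real.exp (-(x * p) + x ^ 2 / 8) := by
  have h := bern_mgf (1 - p) (by linarith) (by linarith) x hx
  have h2 := mul_le_mul_of_nonneg_right h (Real.exp_pos (-x)).le
  calc p * Real.exp (-x) + (1 - p)
      = (1 - (1 - p) + (1 - p) * Real.exp x) * Real.exp (-x) := by
        rw [add_mul, mul_assoc, ← Real.exp_add]
        rw [show x + -x = 0 by ring, Real.exp_zero]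
        ring
    _ ≤ Real.exp ((1 - p) * x + x ^ 2 / 8) * Real.exp (-x) := h2
    _ = Real.exp (-(x * p) + x ^ 2 / 8) := by
        rw [← Real.exp_add]; ring_nf

private lemma hoeffding_powerset {ι : Type*} [DecidableEq ι] (u : Finset ι) (hu : u.Nonempty)
    (w : ι → ℝ) (h0 : ∀ i ∈ u, 0 ≤ w i) (h1 : ∀ i ∈ u, w i ≤ 1)
    (a : ℝ) (ha : a ≤ ∑ i ∈ u, w i) :
    ∑ T ∈ u.powerset.filter (fun T => (T.card : ℝ) ≤ a),
        (∏ i ∈ T, w i) * ∏ i ∈ u \ T, (1 - w i)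
      ≤ Real.exp (-2 * (∑ i ∈ u, w i - a) ^ 2 / u.card) := by
  set m : ℝ := ∑ i ∈ u, w i with hm
  set n : ℝ := (u.card : ℝ) with hn
  have hnpos : (0:ℝ) < n := by
    simp only [hn]; exact_mod_cast Finset.card_pos.mpr hu
  set t : ℝ := m - a with ht
  have htpos : 0 ≤ t := by simp [ht]; linarith
  set l : ℝ := 4 * t / n with hl
  have hlpos : 0 ≤ l := by positivity
  have hWnonneg : ∀ T ∈ u.powerset, 0 ≤ (∏ i ∈ T, w i) * ∏ i ∈ u \ T, (1 - w i) := by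
    intro T hT
    rw [Finset.mem_powerset] at hT
    apply mul_nonneg
    · exact Finset.prod_nonneg fun i hi => h0 i (hT hi)
    · exact Finset.prod_nonneg fun i hi => by
        have := h1 i (Finset.mem_sdiff.mp hi).1; linarith
  calc ∑ T ∈ u.powerset.filter (fun T => (T.card : ℝ) ≤ a),
          (∏ i ∈ T, w i) * ∏ i ∈ u \ T, (1 - w i)
      ≤ ∑ T ∈ u.powerset.filter (fun T => (T.card : ℝ) ≤ a),
          ((∏ i ∈ T, w i) * ∏ i ∈ u \ T, (1 - w i)) * Real.exp (l * (a - T.card)) := by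
        apply Finset.sum_le_sum
        intro T hT
        rw [Finset.mem_filter] at hT
        have h1' : (1:ℝ) ≤ Real.exp (l * (a - T.card)) := by
          rw [← Real.exp_zero]
          exact Real.exp_le_exp.mpr (by nlinarith [hT.2])
        nlinarith [hWnonneg T hT.1]
    _ ≤ ∑ T ∈ u.powerset,
          ((∏ i ∈ T, w i) * ∏ i ∈ u \ T, (1 - w i)) * Real.exp (l * (a - T.card)) := by
        apply Finset.sum_le_sum_of_subset_of_nonneg (Finset.filter_subset _ _)
        intro T hT _
        exact mul_nonneg (hWnonneg T hT) (Real.exp_pos _).le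
    _ = Real.exp (l * a) * ∑ T ∈ u.powerset,
          (∏ i ∈ T, w i * Real.exp (-l)) * ∏ i ∈ u \ T, (1 - w i) := by
        rw [Finset.mul_sum]
        apply Finset.sum_congr rfl
        intro T hT
        rw [Finset.prod_mul_distrib, Finset.prod_const, ← Real.exp_nat_mul]
        rw [show l * (a - (T.card : ℝ)) = l * a + (T.card : ℝ) * (-l) by ring, Real.exp_add]
        ring
    _ = Real.exp (l * a) * ∏ i ∈ u, (w i * Real.exp (-l) + (1 - w i)) := by
        rw [Finset.prod_add]
    _ ≤ Real.exp (l * a) * ∏ i ∈ u, Real.exp (-(l * w i) + l ^ 2 / 8) := by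
        apply mul_le_mul_of_nonneg_left _ (Real.exp_pos _).le
        apply Finset.prod_le_prod
        · intro i hi
          have := h0 i hi; have := h1 i hi
          have := Real.exp_pos (-l)
          nlinarith
        · intro i hi
          simpa [mul_comm] using bern_mgf_neg (w i) (h0 i hi) (h1 i hi) l hlpos
    _ = Real.exp (l * a) * Real.exp (∑ i ∈ u, (-(l * w i) + l ^ 2 / 8)) := by
        rw [Real.exp_sum]
    _ = Real.exp (-2 * t ^ 2 / n) := by
        rw [← Real.exp_add]
        congr 1
        have hsum : ∑ i ∈ u, (-(l * w i) + l ^ 2 / 8) = -(l * m) + n * (l ^ 2 / 8) := by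
          rw [Finset.sum_add_distrib, Finset.sum_const, Finset.sum_neg_distrib,
            ← Finset.mul_sum, nsmul_eq_mul, ← hm, ← hn]
        rw [hsum, hl, ht]
        field_simp
        ring

private def goodP {M : ℕ} (i : Fin M) (k : ℤ) (T : Finset (Fin M)) : Prop :=
  (if i ∈ T then k else -k) = (if (0:ℤ) ≤ k * (2 * T.card - M) then 1 else -1)

private instance goodP.dec {M : ℕ} (i : Fin M) (k : ℤ) : DecidablePred (goodP i k) :=
  fun T => by unfold goodP; infer_instance

private lemma comb_bounds {M : ℕ} (hM : 2 ≤ M) (i : Fin M) (w : Fin M → ℝ)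
    (hw0 : ∀ i', 0 ≤ w i') (hw1 : ∀ i', w i' ≤ 1)
    (hwbar : 1 / 2 + 1 / (M : ℝ) ≤ (M : ℝ)⁻¹ * ∑ i', w i')
    (k : ℤ) (hk : k = 1 ∨ k = -1) :
    w i - w i * Real.exp (-(2 * (M : ℝ) ^ 2
          * ((M : ℝ)⁻¹ * ∑ i', w i' - 1 / 2 + (1 - w i) / (M : ℝ)) ^ 2) / ((M : ℝ) - 1))
      ≤ (∑ T ∈ Finset.univ.powerset.filter (goodP i k),
          (∏ i' ∈ T, w i') * ∏ i' ∈ Finset.univ \ T, (1 - w i'))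
    ∧ (∑ T ∈ Finset.univ.powerset.filter (goodP i k),
          (∏ i' ∈ T, w i') * ∏ i' ∈ Finset.univ \ T, (1 - w i'))
      ≤ w i + (1 - w i) * Real.exp (-(2 * (M : ℝ) ^ 2
          * ((M : ℝ)⁻¹ * ∑ i', w i' - 1 / 2 - w i / (M : ℝ)) ^ 2) / ((M : ℝ) - 1)) := by
  classical
  have hMR : (0:ℝ) < (M:ℝ) := by exact_mod_cast (by omega : 0 < M)
  have hM1R : (0:ℝ) < (M:ℝ) - 1 := by
    have : (2:ℝ) ≤ (M:ℝ) := by exact_mod_cast hM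
    linarith
  set u : Finset (Fin M) := Finset.univ.erase i with hu
  have hiu : i ∉ u := Finset.notMem_erase i _
  have hins : insert i u = Finset.univ := Finset.insert_erase (Finset.mem_univ i)
  have hucard : (u.card : ℝ) = (M : ℝ) - 1 := by
    rw [hu, Finset.card_erase_of_mem (Finset.mem_univ i), Finset.card_univ, Fintype.card_fin]
    have h1 : (1:ℕ) ≤ M := by omega
    push_cast [Nat.cast_sub h1]
    ring
  have hune : u.Nonempty := by
    rw [← Finset.card_pos]
    have : (0:ℝ) < (u.card : ℝ) := by rw [hucard]; linarith
    exact_mod_cast this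
  have husum : ∑ i' ∈ u, w i' = (∑ i', w i') - w i := by
    rw [hu]
    have := Finset.sum_erase_add Finset.univ w (Finset.mem_univ i)
    linarith
  have hSw : (M:ℝ)/2 + 1 ≤ ∑ i', w i' := by
    have h2 : (M:ℝ) * (1/2 + 1/(M:ℝ)) ≤ (M:ℝ) * ((M:ℝ)⁻¹ * ∑ i', w i') :=
      mul_le_mul_of_nonneg_left hwbar hMR.le
    have h3 : (M:ℝ) * ((M:ℝ)⁻¹ * ∑ i', w i') = ∑ i', w i' := by
      field_simp
    have h4 : (M:ℝ) * (1/2 + 1/(M:ℝ)) = (M:ℝ)/2 + 1 := by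
      field_simp
    rw [h3, h4] at h2
    exact h2
  set Wt' : Finset (Fin M) → ℝ := fun T => (∏ i' ∈ T, w i') * ∏ i' ∈ u \ T, (1 - w i') with hWt'
  have hWt'nonneg : ∀ T, 0 ≤ Wt' T := by
    intro T
    apply mul_nonneg (Finset.prod_nonneg fun i' _ => hw0 i')
    exact Finset.prod_nonneg fun i' _ => by linarith [hw1 i']
  have hWt'sum : ∑ T ∈ u.powerset, Wt' T = 1 := by
    calc ∑ T ∈ u.powerset, Wt' T = ∏ i' ∈ u, (w i' + (1 - w i')) :=
          (Finset.prod_add w (fun i' => 1 - w i') u).symm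
      _ = 1 := by simp
  have key : ∀ (P : Finset (Fin M) → Prop) (inst : DecidablePred P) (a : ℝ),
      (∀ T, T ∈ u.powerset → P T → (T.card : ℝ) ≤ a) → a ≤ ∑ i' ∈ u, w i' →
      ∑ T ∈ u.powerset.filter P, Wt' T
        ≤ Real.exp (-2 * ((∑ i' ∈ u, w i') - a) ^ 2 / u.card) := by
    intro P inst a hPa ha
    calc ∑ T ∈ u.powerset.filter P, Wt' T
        ≤ ∑ T ∈ u.powerset.filter (fun T => (T.card:ℝ) ≤ a), Wt' T := by
          apply Finset.sum_le_sum_of_subset_of_nonneg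
          · intro T hT
            rw [Finset.mem_filter] at *
            exact ⟨hT.1, hPa T hT.1 hT.2⟩
          · intro T _ _; exact hWt'nonneg T
      _ ≤ _ := hoeffding_powerset u hune w (fun i' _ => hw0 i') (fun i' _ => hw1 i') a ha
  have hiT : ∀ T, T ∈ u.powerset → i ∉ T := fun T hT h =>
    hiu (Finset.mem_powerset.mp hT h)
  have hsd1 : ∀ T, T ∈ u.powerset → insert i u \ T = insert i (u \ T) := by
    intro T hT
    have hiT' : i ∉ T := hiT T hT
    ext x
    by_cases hxi : x = i
    · subst hxi; simp [hiT', hu]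
    · simp [hxi, hu, Finset.mem_erase]
  have hsd2 : ∀ T, T ∈ u.powerset → insert i u \ insert i T = u \ T := by
    intro T hT
    ext x
    by_cases hxi : x = i
    · subst hxi; simp [hu]
    · simp [hxi, hu, Finset.mem_erase]
  have hfull1 : ∀ T, T ∈ u.powerset →
      (∏ i' ∈ T, w i') * ∏ i' ∈ insert i u \ T, (1 - w i') = (1 - w i) * Wt' T := by
    intro T hT
    rw [hsd1 T hT, Finset.prod_insert (fun h => hiu (Finset.mem_sdiff.mp h).1), hWt']
    ring
  have hfull2 : ∀ T, T ∈ u.powerset →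
      (∏ i' ∈ insert i T, w i') * ∏ i' ∈ insert i u \ insert i T, (1 - w i')
        = w i * Wt' T := by
    intro T hT
    rw [hsd2 T hT, Finset.prod_insert (hiT T hT), hWt']
    ring
  have hA : (∑ T ∈ Finset.univ.powerset.filter (goodP i k),
        (∏ i' ∈ T, w i') * ∏ i' ∈ Finset.univ \ T, (1 - w i'))
      = ∑ T ∈ u.powerset, ((if goodP i k T then (1 - w i) * Wt' T else 0)
          + (if goodP i k (insert i T) then w i * Wt' T else 0)) := by
    rw [Finset.sum_filter, ← hins, Finset.sum_powerset_insert hiu, Finset.sum_add_distrib]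
    congr 1
    · apply Finset.sum_congr rfl
      intro T hT
      by_cases hg : goodP i k T
      · rw [if_pos hg, if_pos hg, hfull1 T hT]
      · rw [if_neg hg, if_neg hg]
    · apply Finset.sum_congr rfl
      intro T hT
      by_cases hg : goodP i k (insert i T)
      · rw [if_pos hg, if_pos hg, hfull2 T hT]
      · rw [if_neg hg, if_neg hg]
  -- card bounds from goodness
  have hcard_ins : ∀ T, T ∈ u.powerset → ¬ goodP i k (insert i T) →
      (T.card : ℝ) ≤ (M:ℝ)/2 - 1 := by
    intro T hT hng
    unfold goodP at hng
    rw [if_pos (Finset.mem_insert_self i T),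
      Finset.card_insert_of_notMem (hiT T hT)] at hng
    push_cast at hng
    rcases hk with rfl | rfl
    · by_cases h : (0:ℤ) ≤ 1 * (2 * ((T.card : ℤ) + 1) - M)
      · exact absurd (if_pos h).symm hng
      · push_neg at h
        have h3 : 2 * (T.card:ℤ) + 2 ≤ M := by linarith
        have h4 : 2 * (T.card:ℝ) + 2 ≤ (M:ℝ) := by exact_mod_cast h3
        linarith
    · by_cases h : (0:ℤ) ≤ (-1) * (2 * ((T.card : ℤ) + 1) - M)
      · have h3 : 2 * (T.card:ℤ) + 2 ≤ M := by linarith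
        have h4 : 2 * (T.card:ℝ) + 2 ≤ (M:ℝ) := by exact_mod_cast h3
        linarith
      · exact absurd (if_neg h).symm hng
  have hcard_T : ∀ T, T ∈ u.powerset → goodP i k T → (T.card : ℝ) ≤ (M:ℝ)/2 := by
    intro T hT hg
    unfold goodP at hg
    rw [if_neg (hiT T hT)] at hg
    rcases hk with rfl | rfl
    · by_cases h : (0:ℤ) ≤ 1 * (2 * (T.card : ℤ) - M)
      · rw [if_pos h] at hg; norm_num at hg
      · push_neg at h
        have h3 : 2 * (T.card:ℤ) + 1 ≤ M := by linarith
        have h4 : 2 * (T.card:ℝ) + 1 ≤ (M:ℝ) := by exact_mod_cast h3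
        linarith
    · by_cases h : (0:ℤ) ≤ (-1) * (2 * (T.card : ℤ) - M)
      · have h3 : 2 * (T.card:ℤ) ≤ M := by linarith
        have h4 : 2 * (T.card:ℝ) ≤ (M:ℝ) := by exact_mod_cast h3
        linarith
      · rw [if_neg h] at hg; norm_num at hg
  -- Hoeffding tails
  have htail1 : ∑ T ∈ u.powerset.filter (fun T => ¬ goodP i k (insert i T)), Wt' T
      ≤ Real.exp (-(2 * (M : ℝ) ^ 2
          * ((M : ℝ)⁻¹ * ∑ i', w i' - 1 / 2 + (1 - w i) / (M : ℝ)) ^ 2) / ((M : ℝ) - 1)) := by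
    have h := key (fun T => ¬ goodP i k (insert i T)) (fun T => inferInstance)
      ((M:ℝ)/2 - 1) hcard_ins (by rw [husum]; linarith [hw1 i])
    refine h.trans (le_of_eq ?_)
    rw [husum, hucard]
    congr 1
    field_simp
    ring
  have htail2 : ∑ T ∈ u.powerset.filter (fun T => goodP i k T), Wt' T
      ≤ Real.exp (-(2 * (M : ℝ) ^ 2
          * ((M : ℝ)⁻¹ * ∑ i', w i' - 1 / 2 - w i / (M : ℝ)) ^ 2) / ((M : ℝ) - 1)) := by
    have h := key (fun T => goodP i k T) (fun T => inferInstance)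
      ((M:ℝ)/2) hcard_T (by rw [husum]; linarith [hw1 i])
    refine h.trans (le_of_eq ?_)
    rw [husum, hucard]
    congr 1
    field_simp
    ring
  have hsplitP : ∀ (P : Finset (Fin M) → Prop) (inst : DecidablePred P),
      ∑ T ∈ u.powerset.filter P, Wt' T
        = 1 - ∑ T ∈ u.powerset.filter (fun T => ¬ P T), Wt' T := by
    intro P inst
    have h := Finset.sum_filter_add_sum_filter_not u.powerset P Wt'
    rw [hWt'sum] at h
    linarith
  constructor
  · -- lower bound
    rw [hA]
    have h1 : ∑ T ∈ u.powerset, (if goodP i k (insert i T) then w i * Wt' T else 0)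
        ≤ ∑ T ∈ u.powerset, ((if goodP i k T then (1 - w i) * Wt' T else 0)
            + (if goodP i k (insert i T) then w i * Wt' T else 0)) := by
      apply Finset.sum_le_sum
      intro T _
      have h0 : 0 ≤ (if goodP i k T then (1 - w i) * Wt' T else 0) := by
        split
        · exact mul_nonneg (by linarith [hw1 i]) (hWt'nonneg T)
        · exact le_refl 0
      linarith
    refine le_trans ?_ h1
    have h2 : ∑ T ∈ u.powerset, (if goodP i k (insert i T) then w i * Wt' T else 0)
        = w i * ∑ T ∈ u.powerset.filter (fun T => goodP i k (insert i T)), Wt' T := by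
      rw [← Finset.sum_filter, Finset.mul_sum]
    rw [h2, hsplitP (fun T => goodP i k (insert i T)) (fun T => inferInstance)]
    have h3 : 0 ≤ w i * (Real.exp (-(2 * (M : ℝ) ^ 2
          * ((M : ℝ)⁻¹ * ∑ i', w i' - 1 / 2 + (1 - w i) / (M : ℝ)) ^ 2) / ((M : ℝ) - 1))
        - ∑ T ∈ u.powerset.filter (fun T => ¬ goodP i k (insert i T)), Wt' T) :=
      mul_nonneg (hw0 i) (sub_nonneg.mpr htail1)
    nlinarith [h3]
  · -- upper bound
    rw [hA, Finset.sum_add_distrib]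
    have ha : ∑ T ∈ u.powerset, (if goodP i k T then (1 - w i) * Wt' T else 0)
        = (1 - w i) * ∑ T ∈ u.powerset.filter (fun T => goodP i k T), Wt' T := by
      rw [← Finset.sum_filter, Finset.mul_sum]
    have hb : ∑ T ∈ u.powerset, (if goodP i k (insert i T) then w i * Wt' T else 0)
        ≤ w i := by
      calc ∑ T ∈ u.powerset, (if goodP i k (insert i T) then w i * Wt' T else 0)
          ≤ ∑ T ∈ u.powerset, w i * Wt' T := by
            apply Finset.sum_le_sum
            intro T _
            split
            · exact le_refl _
            · exact mul_nonneg (hw0 i) (hWt'nonneg T)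
        _ = w i := by rw [← Finset.mul_sum, hWt'sum, mul_one]
    rw [ha]
    have hc : (1 - w i) * ∑ T ∈ u.powerset.filter (fun T => goodP i k T), Wt' T
        ≤ (1 - w i) * Real.exp (-(2 * (M : ℝ) ^ 2
          * ((M : ℝ)⁻¹ * ∑ i', w i' - 1 / 2 - w i / (M : ℝ)) ^ 2) / ((M : ℝ) - 1)) :=
      mul_le_mul_of_nonneg_left htail2 (by linarith [hw1 i])
    linarith

private lemma measure_decomp {Ω : Type*} [MeasurableSpace Ω] (μ : Measure Ω)
    [IsProbabilityMeasure μ]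
    {M N : ℕ} (y : Fin N → Ω → ℤ) (Z : Fin M → Fin N → Ω → ℤ)
    (hym : ∀ j, Measurable (y j)) (hZm : ∀ i j, Measurable (Z i j))
    (hZval : ∀ i j ω, Z i j ω = 1 ∨ Z i j ω = -1)
    (w : Fin M → ℝ)
    (hlaw : ∀ (j : Fin N) (k : ℤ), (k = 1 ∨ k = -1) →
      ∀ h : Fin M → ℤ, (∀ i, h i = 1 ∨ h i = -1) →
      (μ {ω | y j ω = k ∧ ∀ i, Z i j ω = h i}).toReal
        = (μ {ω | y j ω = k}).toReal * ∏ i, (if h i = k then w i else 1 - w i))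
    (i : Fin M) (j : Fin N) (k : ℤ) (hk : k = 1 ∨ k = -1) :
    (μ {ω | Z i j ω = OneStepWMV.mvSign (fun i' j' => Z i' j' ω) j ∧ y j ω = k}).toReal
      = (μ {ω | y j ω = k}).toReal *
        ∑ T ∈ Finset.univ.powerset.filter (goodP i k),
          (∏ i' ∈ T, w i') * ∏ i' ∈ Finset.univ \ T, (1 - w i') := by
  classical
  have hknz : k ≠ -k := by rcases hk with rfl | rfl <;> omega
  set E : Finset (Fin M) → Set Ω :=
    fun T => {ω | y j ω = k ∧ ∀ i', Z i' j ω = (if i' ∈ T then k else -k)} with hE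
  have hmeasE : ∀ T, MeasurableSet (E T) := by
    intro T
    have heq : E T = (y j ⁻¹' {k}) ∩ ⋂ i', (Z i' j ⁻¹' {if i' ∈ T then k else -k}) := by
      ext ω
      simp [hE, Set.mem_iInter]
    rw [heq]
    exact ((hym j) (measurableSet_singleton k)).inter
      (MeasurableSet.iInter fun i' => (hZm i' j) (measurableSet_singleton _))
  have hdisjE : ∀ T T', T ≠ T' → Disjoint (E T) (E T') := by
    intro T T' hne
    rw [Set.disjoint_left]
    intro ω hωT hωT'
    apply hne
    ext i'
    have e : (if i' ∈ T then k else -k) = (if i' ∈ T' then k else -k) := by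
      rw [← hωT.2 i', hωT'.2 i']
    by_cases h1 : i' ∈ T <;> by_cases h2 : i' ∈ T' <;> simp [h1, h2] at e ⊢
    · exact absurd e hknz
    · exact absurd e.symm hknz
  have hsum_on : ∀ T (ω : Ω), ω ∈ E T → (∑ i', Z i' j ω) = k * (2 * T.card - M) := by
    intro T ω hω
    have hcle : T.card ≤ M := by
      have := Finset.card_le_univ T
      simpa [Finset.card_univ] using this
    calc ∑ i', Z i' j ω = ∑ i' ∈ Finset.univ, (if i' ∈ T then k else -k) :=
          Finset.sum_congr rfl (fun i' _ => hω.2 i')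
      _ = (∑ i' ∈ Finset.univ \ T, (if i' ∈ T then k else -k))
          + ∑ i' ∈ T, (if i' ∈ T then k else -k) :=
          (Finset.sum_sdiff (Finset.subset_univ T)).symm
      _ = ((Finset.univ \ T).card : ℤ) * (-k) + (T.card : ℤ) * k := by
          rw [Finset.sum_congr rfl (fun x hx => if_neg (Finset.mem_sdiff.mp hx).2),
            Finset.sum_congr rfl (fun x hx => if_pos hx), Finset.sum_const, Finset.sum_const,
            nsmul_eq_mul, nsmul_eq_mul]
      _ = k * (2 * T.card - M) := by
          rw [Finset.card_sdiff_of_subset (Finset.subset_univ T), Finset.card_univ, Fintype.card_fin]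
          push_cast [Nat.cast_sub hcle]
          ring
  have hmv : ∀ T (ω : Ω), ω ∈ E T →
      OneStepWMV.mvSign (fun i' j' => Z i' j' ω) j
        = (if (0:ℤ) ≤ k * (2 * T.card - M) then 1 else -1) := by
    intro T ω hω
    unfold OneStepWMV.mvSign
    rw [hsum_on T ω hω]
  have htarget : {ω | Z i j ω = OneStepWMV.mvSign (fun i' j' => Z i' j' ω) j ∧ y j ω = k}
      = ⋃ T ∈ Finset.univ.powerset.filter (goodP i k), E T := by
    ext ω
    simp only [Set.mem_setOf_eq, Set.mem_iUnion, exists_prop]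
    constructor
    · rintro ⟨hZmv, hyk⟩
      set T : Finset (Fin M) := Finset.univ.filter (fun i' => Z i' j ω = k) with hTdef
      have hmem : ω ∈ E T := by
        refine ⟨hyk, fun i' => ?_⟩
        by_cases hzi : Z i' j ω = k
        · rw [if_pos (by simp [hTdef, hzi])]
          exact hzi
        · rw [if_neg (by simp [hTdef, hzi])]
          rcases hZval i' j ω with h1 | h1 <;> rcases hk with rfl | rfl <;> omega
      refine ⟨T, ?_, hmem⟩
      rw [Finset.mem_filter]
      refine ⟨Finset.mem_powerset.mpr (Finset.subset_univ T), ?_⟩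
      unfold goodP
      calc (if i ∈ T then k else -k) = Z i j ω := (hmem.2 i).symm
        _ = OneStepWMV.mvSign (fun i' j' => Z i' j' ω) j := hZmv
        _ = _ := hmv T ω hmem
    · rintro ⟨T, hTmem, hωT⟩
      rw [Finset.mem_filter] at hTmem
      refine ⟨?_, hωT.1⟩
      have hg := hTmem.2
      unfold goodP at hg
      calc Z i j ω = (if i ∈ T then k else -k) := hωT.2 i
        _ = _ := by rw [hg, ← hmv T ω hωT]
  have hmeasure_E : ∀ T, (μ (E T)).toReal = (μ {ω | y j ω = k}).toReal
      * ((∏ i' ∈ T, w i') * ∏ i' ∈ Finset.univ \ T, (1 - w i')) := by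
    intro T
    have hvals : ∀ i', (if i' ∈ T then k else -k) = 1 ∨ (if i' ∈ T then k else -k) = -1 := by
      intro i'
      by_cases hi' : i' ∈ T <;> rcases hk with rfl | rfl <;> simp [hi']
    have h := hlaw j k hk (fun i' => if i' ∈ T then k else -k) hvals
    have hset : E T = {ω | y j ω = k ∧ ∀ i'',
        Z i'' j ω = (fun i' => if i' ∈ T then k else -k) i''} := rfl
    rw [hset, h]
    congr 1
    have hcong : ∀ i', (if (if i' ∈ T then k else -k) = k then w i' else 1 - w i')
        = (if i' ∈ T then w i' else 1 - w i') := by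
      intro i'
      by_cases hi' : i' ∈ T
      · simp [hi']
      · rw [if_neg hi', if_neg hi', if_neg (fun hcon => hknz hcon.symm)]
    calc ∏ i', (if (fun i' => if i' ∈ T then k else -k) i' = k then w i' else 1 - w i')
        = ∏ i', (if i' ∈ T then w i' else 1 - w i') :=
          Finset.prod_congr rfl (fun i' _ => hcong i')
      _ = (∏ i' ∈ Finset.univ \ T, (if i' ∈ T then w i' else 1 - w i'))
          * ∏ i' ∈ T, (if i' ∈ T then w i' else 1 - w i') :=
          (Finset.prod_sdiff (Finset.subset_univ T)).symm
      _ = (∏ i' ∈ T, w i') * ∏ i' ∈ Finset.univ \ T, (1 - w i') := by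
          rw [Finset.prod_congr rfl (fun x hx => if_neg (Finset.mem_sdiff.mp hx).2),
            Finset.prod_congr rfl (fun x hx => if_pos hx)]
          ring
  rw [htarget, measure_biUnion_finset
    (fun T _ T' _ hne => hdisjE T T' hne) (fun T _ => hmeasE T)]
  rw [ENNReal.toReal_sum (fun T _ => measure_ne_top μ _)]
  rw [Finset.sum_congr rfl (fun T _ => hmeasure_E T), ← Finset.mul_sum]

private lemma convex_comb {c1 c2 A1 A2 L U : ℝ} (h1 : 0 ≤ c1) (h2 : 0 ≤ c2)
    (hs : c1 + c2 = 1) (hA1 : L ≤ A1) (hA1' : A1 ≤ U) (hA2 : L ≤ A2) (hA2' : A2 ≤ U) :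
    L ≤ c1 * A1 + c2 * A2 ∧ c1 * A1 + c2 * A2 ≤ U := by
  have eL : c1 * L + c2 * L = L := by rw [← add_mul, hs, one_mul]
  have eU : c1 * U + c2 * U = U := by rw [← add_mul, hs, one_mul]
  constructor
  · linarith [mul_le_mul_of_nonneg_left hA1 h1, mul_le_mul_of_nonneg_left hA2 h2]
  · linarith [mul_le_mul_of_nonneg_left hA1' h1, mul_le_mul_of_nonneg_left hA2' h2]

end Aux

/-- Under the binary homogeneous Dawid–Skene model with full assignment:
if `w̄ ≥ 1/2 + 1/M`, then for every worker `i` and item `j`,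
`w_i − ξ₁ ≤ P(Z_ij = ŷ_j^mv | y_j) ≤ w_i + ξ₂` (for each possible value of `y_j` having
positive probability), and the same bounds hold unconditionally, where
`ξ₁ = w_i exp(−2M²(w̄ − 1/2 + (1−w_i)/M)²/(M−1))` and
`ξ₂ = (1−w_i) exp(−2M²(w̄ − 1/2 − w_i/M)²/(M−1))`. -/
theorem worker_label_agrees_mv_bounds
    {Ω : Type*} [MeasurableSpace Ω] (μ : Measure Ω) [IsProbabilityMeasure μ]
    {M N : ℕ} (hM : 2 ≤ M) (hN : 0 < N)
    (y : Fin N → Ω → ℤ) (Z : Fin M → Fin N → Ω → ℤ)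
    (hym : ∀ j, Measurable (y j)) (hZm : ∀ i j, Measurable (Z i j))
    (hyval : ∀ j ω, y j ω = 1 ∨ y j ω = -1)
    (hZval : ∀ i j ω, Z i j ω = 1 ∨ Z i j ω = -1)
    (w : Fin M → ℝ) (hw0 : ∀ i, 0 ≤ w i) (hw1 : ∀ i, w i ≤ 1)
    (hlaw : ∀ (j : Fin N) (k : ℤ), (k = 1 ∨ k = -1) →
      ∀ h : Fin M → ℤ, (∀ i, h i = 1 ∨ h i = -1) →
      (μ {ω | y j ω = k ∧ ∀ i, Z i j ω = h i}).toReal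
        = (μ {ω | y j ω = k}).toReal * ∏ i, (if h i = k then w i else 1 - w i))
    (hindep : iIndepFun (fun j ω => (y j ω, fun i => Z i j ω)) μ)
    (hwbar : 1 / 2 + 1 / (M : ℝ) ≤ (M : ℝ)⁻¹ * ∑ i, w i) :
    ∀ (i : Fin M) (j : Fin N),
      (∀ k : ℤ, (k = 1 ∨ k = -1) → 0 < μ {ω | y j ω = k} →
        (w i - w i * Real.exp (-(2 * (M : ℝ) ^ 2
              * ((M : ℝ)⁻¹ * ∑ i', w i' - 1 / 2 + (1 - w i) / (M : ℝ)) ^ 2)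
            / ((M : ℝ) - 1))
          ≤ (μ {ω | Z i j ω = OneStepWMV.mvSign (fun i' j' => Z i' j' ω) j ∧ y j ω = k}).toReal
              / (μ {ω | y j ω = k}).toReal)
        ∧ (μ {ω | Z i j ω = OneStepWMV.mvSign (fun i' j' => Z i' j' ω) j ∧ y j ω = k}).toReal
              / (μ {ω | y j ω = k}).toReal
          ≤ w i + (1 - w i) * Real.exp (-(2 * (M : ℝ) ^ 2
              * ((M : ℝ)⁻¹ * ∑ i', w i' - 1 / 2 - w i / (M : ℝ)) ^ 2)
            / ((M : ℝ) - 1)))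
      ∧ (w i - w i * Real.exp (-(2 * (M : ℝ) ^ 2
              * ((M : ℝ)⁻¹ * ∑ i', w i' - 1 / 2 + (1 - w i) / (M : ℝ)) ^ 2)
            / ((M : ℝ) - 1))
          ≤ (μ {ω | Z i j ω = OneStepWMV.mvSign (fun i' j' => Z i' j' ω) j}).toReal)
      ∧ (μ {ω | Z i j ω = OneStepWMV.mvSign (fun i' j' => Z i' j' ω) j}).toReal
          ≤ w i + (1 - w i) * Real.exp (-(2 * (M : ℝ) ^ 2
              * ((M : ℝ)⁻¹ * ∑ i', w i' - 1 / 2 - w i / (M : ℝ)) ^ 2)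
            / ((M : ℝ) - 1)) := by
  intro i j
  have hdec : ∀ (k : ℤ), (k = 1 ∨ k = -1) →
      (μ {ω | Z i j ω = OneStepWMV.mvSign (fun i' j' => Z i' j' ω) j ∧ y j ω = k}).toReal
        = (μ {ω | y j ω = k}).toReal *
          ∑ T ∈ Finset.univ.powerset.filter (goodP i k),
            (∏ i' ∈ T, w i') * ∏ i' ∈ Finset.univ \ T, (1 - w i') :=
    fun k hk => measure_decomp μ y Z hym hZm hZval w hlaw i j k hk
  have hcomb := fun (k : ℤ) (hk : k = 1 ∨ k = -1) => comb_bounds hM i w hw0 hw1 hwbar k hk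
  refine ⟨?_, ?_, ?_⟩
  · intro k hk hpos
    have hYpos : 0 < (μ {ω | y j ω = k}).toReal :=
      ENNReal.toReal_pos hpos.ne' (measure_ne_top μ _)
    rw [hdec k hk, mul_comm ((μ {ω | y j ω = k}).toReal), mul_div_assoc,
      div_self hYpos.ne', mul_one]
    exact hcomb k hk
  all_goals {
    have h1 := hdec 1 (Or.inl rfl)
    have h2 := hdec (-1) (Or.inr rfl)
    have hc1 := hcomb 1 (Or.inl rfl)
    have hc2 := hcomb (-1) (Or.inr rfl)
    have hmvm : Measurable (fun ω => OneStepWMV.mvSign (fun i' j' => Z i' j' ω) j) := by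
      unfold OneStepWMV.mvSign
      have hsm : Measurable (fun ω => ∑ i', Z i' j ω) :=
        Finset.measurable_sum _ (fun i' _ => hZm i' j)
      exact Measurable.ite
        (hsm ((Set.to_countable {n : ℤ | 0 ≤ n}).measurableSet)) measurable_const
        measurable_const
    have hZmvm : MeasurableSet {ω | Z i j ω
        = OneStepWMV.mvSign (fun i' j' => Z i' j' ω) j} := by
      have : {ω | Z i j ω = OneStepWMV.mvSign (fun i' j' => Z i' j' ω) j}
          = (fun ω => (Z i j ω, OneStepWMV.mvSign (fun i' j' => Z i' j' ω) j)) ⁻¹'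
            {p : ℤ × ℤ | p.1 = p.2} := rfl
      rw [this]
      exact ((hZm i j).prodMk hmvm) ((Set.to_countable _).measurableSet)
    have hsplit : {ω | Z i j ω = OneStepWMV.mvSign (fun i' j' => Z i' j' ω) j}
        = {ω | Z i j ω = OneStepWMV.mvSign (fun i' j' => Z i' j' ω) j ∧ y j ω = 1}
          ∪ {ω | Z i j ω = OneStepWMV.mvSign (fun i' j' => Z i' j' ω) j ∧ y j ω = -1} := by
      ext ω
      constructor
      · intro hP
        rcases hyval j ω with h | h
        · exact Or.inl ⟨hP, h⟩
        · exact Or.inr ⟨hP, h⟩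
      · rintro (⟨hP, _⟩ | ⟨hP, _⟩) <;> exact hP
    have hdisjk : Disjoint
        {ω | Z i j ω = OneStepWMV.mvSign (fun i' j' => Z i' j' ω) j ∧ y j ω = 1}
        {ω | Z i j ω = OneStepWMV.mvSign (fun i' j' => Z i' j' ω) j ∧ y j ω = -1} := by
      rw [Set.disjoint_left]
      rintro ω ⟨_, hy1⟩ ⟨_, hy2⟩
      rw [hy1] at hy2
      exact absurd hy2 (by norm_num)
    have hmeas2 : MeasurableSet {ω | Z i j ω
        = OneStepWMV.mvSign (fun i' j' => Z i' j' ω) j ∧ y j ω = -1} := by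
      have : {ω | Z i j ω = OneStepWMV.mvSign (fun i' j' => Z i' j' ω) j ∧ y j ω = -1}
          = {ω | Z i j ω = OneStepWMV.mvSign (fun i' j' => Z i' j' ω) j}
            ∩ (y j ⁻¹' {-1}) := rfl
      rw [this]
      exact hZmvm.inter ((hym j) (measurableSet_singleton _))
    have htotal : (μ {ω | Z i j ω = OneStepWMV.mvSign (fun i' j' => Z i' j' ω) j}).toReal
        = (μ {ω | Z i j ω = OneStepWMV.mvSign (fun i' j' => Z i' j' ω) j ∧ y j ω = 1}).toReal
          + (μ {ω | Z i j ω = OneStepWMV.mvSign (fun i' j' => Z i' j' ω) j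
              ∧ y j ω = -1}).toReal := by
      rw [hsplit, measure_union hdisjk hmeas2,
        ENNReal.toReal_add (measure_ne_top μ _) (measure_ne_top μ _)]
    have hysum : (μ {ω | y j ω = 1}).toReal + (μ {ω | y j ω = -1}).toReal = 1 := by
      have hyd : Disjoint {ω | y j ω = 1} {ω | y j ω = -1} := by
        rw [Set.disjoint_left]
        rintro ω hy1 hy2
        rw [Set.mem_setOf_eq] at hy1 hy2
        rw [hy1] at hy2
        exact absurd hy2 (by norm_num)
      have hyu : {ω | y j ω = 1} ∪ {ω | y j ω = -1} = Set.univ := by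
        ext ω
        simp only [Set.mem_union, Set.mem_setOf_eq, Set.mem_univ, iff_true]
        exact hyval j ω
      have hym2 : MeasurableSet {ω | y j ω = -1} := (hym j) (measurableSet_singleton _)
      have := measure_union (μ := μ) hyd hym2
      rw [hyu, measure_univ] at this
      rw [← ENNReal.toReal_add (measure_ne_top μ _) (measure_ne_top μ _), ← this]
      simp
    have hn1 : (0:ℝ) ≤ (μ {ω | y j ω = 1}).toReal := ENNReal.toReal_nonneg
    have hn2 : (0:ℝ) ≤ (μ {ω | y j ω = -1}).toReal := ENNReal.toReal_nonneg
    rw [htotal, h1, h2]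
    first
    | exact (convex_comb hn1 hn2 hysum hc1.1 hc1.2 hc2.1 hc2.2).1
    | exact (convex_comb hn1 hn2 hysum hc1.1 hc1.2 hc2.1 hc2.2).2
  }
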